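/- Let ρ be a d×d density matrix and t ≥ 0. Then there exists a positive semidefinite d×d matrix τ with Δτ = Δρ such that ρ + t·τ is diagonal, if and only if ρ ⪯ (1+t)·Δρ. Consequently the Δ-robustness of coherence satisfies C_{Δ,R}(ρ) = inf{ t ≥ 0 | ρ ⪯ (1+t)·Δρ }. -/

import Mathlib

open Matrix BigOperators
open scoped Kronecker Classical ComplexOrder

/-- The qubit state with Bloch vector `(rx, ry, rz)`:
`ρ = (1/2)(I + rx σx + ry σy + rz σz)`. -/
noncomputable def blochState (rx ry rz : ℝ) : Matrix (Fin 2) (Fin 2) ℂ :=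
  !![(1 + rz : ℂ)/2, ((rx : ℂ) - ry * Complex.I)/2;
     ((rx : ℂ) + ry * Complex.I)/2, (1 - rz : ℂ)/2]

/-- `K` is an incoherent Kraus operator: every column has at most one nonzero entry. -/
def IsIncoherentKraus {d : ℕ} (K : Matrix (Fin d) (Fin d) ℂ) : Prop :=
  ∀ j i i', K i j ≠ 0 → K i' j ≠ 0 → i = i'

/-- `K` is a strictly incoherent Kraus operator: every row and every column
has at most one nonzero entry. -/
def IsSIKraus {d : ℕ} (K : Matrix (Fin d) (Fin d) ℂ) : Prop :=
  (∀ i j j', K i j ≠ 0 → K i j' ≠ 0 → j = j') ∧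
  (∀ j i i', K i j ≠ 0 → K i' j ≠ 0 → i = i')

/-- Partial trace over the first (A) factor. -/
noncomputable def ptraceA {dA dB : ℕ} (X : Matrix (Fin dA × Fin dB) (Fin dA × Fin dB) ℂ) :
    Matrix (Fin dB) (Fin dB) ℂ :=
  fun j j' => ∑ i, X (i, j) (i, j')

/-- Partial trace over the second (B) factor. -/
noncomputable def ptraceB {dA dB : ℕ} (X : Matrix (Fin dA × Fin dB) (Fin dA × Fin dB) ℂ) :
    Matrix (Fin dA) (Fin dA) ℂ :=
  fun i i' => ∑ j, X (i, j) (i', j)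

/-- The completely dephasing map: keep the diagonal of `X`. -/
noncomputable def dephase {d : ℕ} (X : Matrix (Fin d) (Fin d) ℂ) : Matrix (Fin d) (Fin d) ℂ :=
  Matrix.diagonal X.diag

/-- The Δ-robustness of coherence:
`C_{Δ,R}(ρ) = inf{ t ≥ 0 | ∃ τ ⪰ 0, Δτ = Δρ, ρ + tτ diagonal }`. -/
noncomputable def CDR {d : ℕ} (ρ : Matrix (Fin d) (Fin d) ℂ) : ℝ :=
  sInf {t : ℝ | 0 ≤ t ∧ ∃ τ : Matrix (Fin d) (Fin d) ℂ,
    τ.PosSemidef ∧ dephase τ = dephase ρ ∧ (ρ + (t : ℂ) • τ).IsDiag}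


section Aux
open Matrix

lemma dephase_isDiag {d : ℕ} (X : Matrix (Fin d) (Fin d) ℂ) : (dephase X).IsDiag :=
  Matrix.isDiag_diagonal X.diag

lemma dephase_eq_self_of_isDiag {d : ℕ} {X : Matrix (Fin d) (Fin d) ℂ} (h : X.IsDiag) :
    dephase X = X := by
  ext i j
  by_cases hij : i = j
  · subst hij; simp [dephase, Matrix.diag]
  · simp [dephase, Matrix.diagonal, hij, h hij]

lemma dephase_dephase {d : ℕ} (X : Matrix (Fin d) (Fin d) ℂ) :
    dephase (dephase X) = dephase X :=
  dephase_eq_self_of_isDiag (dephase_isDiag X)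

lemma dephase_add {d : ℕ} (X Y : Matrix (Fin d) (Fin d) ℂ) :
    dephase (X + Y) = dephase X + dephase Y := by
  ext i j
  by_cases hij : i = j
  · subst hij; simp [dephase, Matrix.diag]
  · simp [dephase, Matrix.diagonal, hij]

lemma dephase_smul {d : ℕ} (c : ℂ) (X : Matrix (Fin d) (Fin d) ℂ) :
    dephase (c • X) = c • dephase X := by
  ext i j
  by_cases hij : i = j
  · subst hij; simp [dephase, Matrix.diag]
  · simp [dephase, Matrix.diagonal, hij]

lemma dephase_sub {d : ℕ} (X Y : Matrix (Fin d) (Fin d) ℂ) :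
    dephase (X - Y) = dephase X - dephase Y := by
  ext i j
  by_cases hij : i = j
  · subst hij; simp [dephase, Matrix.diag]
  · simp [dephase, Matrix.diagonal, hij]

lemma dephase_trace {d : ℕ} (X : Matrix (Fin d) (Fin d) ℂ) :
    (dephase X).trace = X.trace := by
  simp [dephase, Matrix.trace, Matrix.diag]

lemma posSemidef_smul_real {d : ℕ} {X : Matrix (Fin d) (Fin d) ℂ} (hX : X.PosSemidef)
    {c : ℝ} (hc : 0 ≤ c) : ((c : ℂ) • X).PosSemidef := by
  constructor
  · unfold Matrix.IsHermitian
    rw [Matrix.conjTranspose_smul, hX.1]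
    congr 1
    simp [Complex.ext_iff]
  · intro x
    exact (hX.smul (Complex.zero_le_real.mpr hc)).2 x

lemma psd_trace_zero {d : ℕ} {A : Matrix (Fin d) (Fin d) ℂ} (hA : A.PosSemidef)
    (h : A.trace = 0) : A = 0 := by
  exact hA.trace_eq_zero_iff.mp h

lemma key_iff {d : ℕ} (ρ : Matrix (Fin d) (Fin d) ℂ)
    (hρ : ρ.PosSemidef) (htr : ρ.trace = 1) (t : ℝ) (ht : 0 ≤ t) :
    (∃ τ : Matrix (Fin d) (Fin d) ℂ,
        τ.PosSemidef ∧ dephase τ = dephase ρ ∧ (ρ + (t : ℂ) • τ).IsDiag) ↔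
      (((1 + t : ℝ) : ℂ) • dephase ρ - ρ).PosSemidef := by
  constructor
  · rintro ⟨τ, hτ, hΔ, hdiag⟩
    have heq : ρ + (t : ℂ) • τ = ((1 + t : ℝ) : ℂ) • dephase ρ := by
      have := dephase_eq_self_of_isDiag hdiag
      rw [dephase_add, dephase_smul, hΔ] at this
      rw [← this]
      push_cast
      ring_nf
      module
    have : ((1 + t : ℝ) : ℂ) • dephase ρ - ρ = (t : ℂ) • τ := by
      rw [← heq]; module
    rw [this]
    exact posSemidef_smul_real hτ ht
  · intro hpsd
    by_cases ht0 : t = 0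
    · subst ht0
      -- dephase ρ - ρ is PSD with trace 0, hence 0, so ρ is diagonal
      have hps : (dephase ρ - ρ).PosSemidef := by
        have : ((1 + (0:ℝ) : ℝ) : ℂ) • dephase ρ - ρ = dephase ρ - ρ := by
          norm_num
        rwa [this] at hpsd
      have htr0 : (dephase ρ - ρ).trace = 0 := by
        rw [Matrix.trace_sub, dephase_trace, sub_self]
      have hzero := psd_trace_zero hps htr0
      have hρdiag : dephase ρ = ρ := by
        have := sub_eq_zero.mp hzero
        exact this
      refine ⟨dephase ρ, ?_, dephase_dephase ρ, ?_⟩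
      · rw [hρdiag]
        exact hρ
      · simpa using (hρdiag ▸ dephase_isDiag ρ)
    · have htpos : 0 < t := lt_of_le_of_ne ht (Ne.symm ht0)
      refine ⟨((t : ℂ))⁻¹ • (((1 + t : ℝ) : ℂ) • dephase ρ - ρ), ?_, ?_, ?_⟩
      · have : ((t : ℂ))⁻¹ = ((t⁻¹ : ℝ) : ℂ) := by push_cast; ring
        rw [this]
        exact posSemidef_smul_real hpsd (by positivity)
      · rw [dephase_smul, dephase_sub, dephase_smul, dephase_dephase]
        have htne : (t : ℂ) ≠ 0 := by exact_mod_cast ht0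
        rw [show (((1 + t : ℝ) : ℂ) • dephase ρ - dephase ρ) = (t:ℂ) • dephase ρ from by
          push_cast; module]
        rw [smul_smul, inv_mul_cancel₀ htne, one_smul]
      · have htne : (t : ℂ) ≠ 0 := by exact_mod_cast ht0
        have : ρ + (t : ℂ) • ((t : ℂ))⁻¹ • (((1 + t : ℝ) : ℂ) • dephase ρ - ρ)
            = ((1 + t : ℝ) : ℂ) • dephase ρ := by
          rw [smul_smul, mul_inv_cancel₀ htne, one_smul]
          ring_nf
          module
        rw [this]
        exact (dephase_isDiag ρ).smul _

end Aux

/-- For a density matrix `ρ` and `t ≥ 0`, a witness `τ ⪰ 0` with `Δτ = Δρ` and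
`ρ + tτ` diagonal exists iff `ρ ⪯ (1+t)Δρ`; consequently
`C_{Δ,R}(ρ) = inf{ t ≥ 0 | ρ ⪯ (1+t)Δρ }`. -/

theorem CDR_simplified (d : ℕ) (ρ : Matrix (Fin d) (Fin d) ℂ)
    (hρ : ρ.PosSemidef) (htr : ρ.trace = 1) (t : ℝ) (ht : 0 ≤ t) :
    ((∃ τ : Matrix (Fin d) (Fin d) ℂ,
        τ.PosSemidef ∧ dephase τ = dephase ρ ∧ (ρ + (t : ℂ) • τ).IsDiag) ↔
      (((1 + t : ℝ) : ℂ) • dephase ρ - ρ).PosSemidef) ∧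
    CDR ρ = sInf {s : ℝ | 0 ≤ s ∧ (((1 + s : ℝ) : ℂ) • dephase ρ - ρ).PosSemidef} := by
  have key := fun (s : ℝ) (hs : 0 ≤ s) => key_iff ρ hρ htr s hs
  refine ⟨key t ht, ?_⟩
  unfold CDR
  congr 1
  ext s
  constructor
  · rintro ⟨hs, hex⟩
    exact ⟨hs, (key s hs).mp hex⟩
  · rintro ⟨hs, hpsd⟩
    exact ⟨hs, (key s hs).mpr hpsd⟩
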